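/- Fix integers n ≥ 2 and k ≥ 3; set γ_k := 1/2 − 1/k, μ_k := k/2 − 1. Let η : ℝ → [0,1] be a smooth even cutoff with η ≡ 1 on [−1,1] and η ≡ 0 outside (−6/5, 6/5). Fix constants P ≥ 1 and Ĉ₀, C₋, C₊, C₋′, C₊′ > 0. Then there exist a constant C₂ and a time τ₁₀, depending only on n, k, η, P and the fixed constants, such that the following holds for every τ ≥ τ₁₀. Let v be a C² function of σ on |σ| ≤ (6/5)e^{γ_k τ/5} (extended by 0 outside) satisfying: (i) |N_loc(σ) − n v′(σ) I(σ)| ≤ Ĉ₀ e^{−(3/2)μ_k τ} for |σ| ≤ P; (ii) 1 + v(σ) ≥ 1/2, C₋|σ|^k ≤ e^{μ_k τ}|v(σ)| ≤ C₊|σ|^k, and C₋′|σ|^{k−1} ≤ e^{μ_k τ}|v′(σ)| ≤ C₊′|σ|^{k−1} for P ≤ |σ| ≤ (6/5)e^{γ_k τ/5}, where N_loc(σ) := (2(n−1)v′(σ)² − v(σ)²)/(2(1+v(σ))) and I(σ) := ∫₀^σ v″(s)/(1+v(s)) ds. Then, writing η_τ(σ) := η(e^{−γ_k τ/5} σ)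 and G(σ) := η_τ(σ)(N_loc(σ) − n v′(σ) I(σ)) + ((∂_τ η_τ)(σ) − η_τ″(σ) + (σ/2) η_τ′(σ)) v(σ) − 2 η_τ′(σ) v′(σ), one has (∫_ℝ G(σ)² e^{−σ²/4} dσ)^{1/2} ≤ C₂ e^{−(3/2)μ_k τ}. -/

import Mathlib

open Topology Filter Asymptotics Set MeasureTheory

/-- `γ_k = 1/2 - 1/k`. -/
noncomputable def gam (k : ℕ) : ℝ := 1/2 - 1/(k:ℝ)

/-- `μ_k = k/2 - 1`. -/
noncomputable def mu (k : ℕ) : ℝ := (k:ℝ)/2 - 1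

/-- `N_loc(σ) = (2(n-1)v'(σ)² - v(σ)²)/(2(1+v(σ)))`. -/
noncomputable def Nloc (n : ℕ) (v : ℝ → ℝ) (σ : ℝ) : ℝ :=
  (2 * ((n:ℝ) - 1) * (deriv v σ)^2 - (v σ)^2) / (2 * (1 + v σ))

/-- `I(σ) = ∫₀^σ v''(s)/(1+v(s)) ds`. -/
noncomputable def Iop (v : ℝ → ℝ) (σ : ℝ) : ℝ :=
  ∫ s in (0:ℝ)..σ, deriv (deriv v) s / (1 + v s)

/-- The error term `G = (∂_τ - 𝒜)v̌ = η_τ(N_loc - n v' I) + (∂_τη_τ - η_τ'' + (σ/2)η_τ')v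
- 2η_τ' v'`, where `η_τ(σ) = η(e^{-γ_k τ/5}σ)`. -/
noncomputable def Gfun (n k : ℕ) (η v : ℝ → ℝ) (τ σ : ℝ) : ℝ :=
  η (Real.exp (-gam k * τ/5) * σ) * (Nloc n v σ - (n:ℝ) * deriv v σ * Iop v σ)
    + (deriv (fun t => η (Real.exp (-gam k * t/5) * σ)) τ
        - deriv (fun s => deriv (fun s' => η (Real.exp (-gam k * τ/5) * s')) s) σ
        + (σ/2) * deriv (fun s => η (Real.exp (-gam k * τ/5) * s)) σ) * v σ
    - 2 * deriv (fun s => η (Real.exp (-gam k * τ/5) * s)) σ * deriv v σ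

/-! ### Auxiliary lemmas -/

lemma st16_flat_deriv {f : ℝ → ℝ} {c x : ℝ} {U : Set ℝ} (hU : IsOpen U) (hx : x ∈ U)
    (hf : ∀ y ∈ U, f y = c) : deriv f x = 0 := by
  have h : f =ᶠ[𝓝 x] fun _ => c := eventually_of_mem (hU.mem_nhds hx) hf
  rw [h.deriv_eq, deriv_const]

lemma st16_open_inner : IsOpen {y : ℝ | |y| < 1} := isOpen_lt continuous_abs continuous_const

lemma st16_open_outer : IsOpen {y : ℝ | 6/5 < |y|} := isOpen_lt continuous_const continuous_abs

section
variable {η : ℝ → ℝ}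

lemma st16_flat1_inner (hη1 : ∀ y : ℝ, |y| ≤ 1 → η y = 1) {y : ℝ} (hy : |y| < 1) :
    deriv η y = 0 :=
  st16_flat_deriv st16_open_inner hy (fun z hz => hη1 z hz.le)

lemma st16_flat2_inner (hη1 : ∀ y : ℝ, |y| ≤ 1 → η y = 1) {y : ℝ} (hy : |y| < 1) :
    deriv (deriv η) y = 0 :=
  st16_flat_deriv st16_open_inner hy (fun z hz => st16_flat1_inner hη1 hz)

lemma st16_flat1_outer (hη0 : ∀ y : ℝ, 6/5 ≤ |y| → η y = 0) {y : ℝ} (hy : 6/5 < |y|) :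
    deriv η y = 0 :=
  st16_flat_deriv st16_open_outer hy (fun z hz => hη0 z hz.le)

lemma st16_flat2_outer (hη0 : ∀ y : ℝ, 6/5 ≤ |y| → η y = 0) {y : ℝ} (hy : 6/5 < |y|) :
    deriv (deriv η) y = 0 :=
  st16_flat_deriv st16_open_outer hy (fun z hz => st16_flat1_outer hη0 hz)

lemma st16_deriv_smooth' (hη : ContDiff ℝ (⊤ : ℕ∞) η) :
    ContDiff ℝ (⊤ : ℕ∞) (deriv η) :=
  (contDiff_infty_iff_deriv.mp hη).2

lemma st16_diff (hη : ContDiff ℝ (⊤ : ℕ∞) η) : Differentiable ℝ η :=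
  (contDiff_infty_iff_deriv.mp hη).1

lemma st16_bound (hη : ContDiff ℝ (⊤ : ℕ∞) η) (hη0 : ∀ y : ℝ, 6/5 ≤ |y| → η y = 0) :
    ∃ M : ℝ, 1 ≤ M ∧ ∀ y : ℝ, |deriv η y| ≤ M ∧ |deriv (deriv η) y| ≤ M := by
  have h1 : ContDiff ℝ (⊤ : ℕ∞) (deriv η) := st16_deriv_smooth' hη
  have h2 : ContDiff ℝ (⊤ : ℕ∞) (deriv (deriv η)) := st16_deriv_smooth' h1
  have hc : ContinuousOn (fun y => |deriv η y| + |deriv (deriv η) y|) (Icc (-2) 2) :=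
    ((h1.continuous.abs.add h2.continuous.abs)).continuousOn
  obtain ⟨M, hM⟩ := (isCompact_Icc : IsCompact (Icc (-2:ℝ) 2)).exists_bound_of_continuousOn hc
  refine ⟨max M 1, le_max_right _ _, fun y => ?_⟩
  rcases le_or_gt (|y|) 2 with hy | hy
  · have := hM y (abs_le.mp hy)
    rw [Real.norm_eq_abs, abs_of_nonneg (by positivity)] at this
    constructor
    · exact le_trans (by nlinarith [abs_nonneg (deriv (deriv η) y)]) (le_max_left M 1)
    · exact le_trans (by nlinarith [abs_nonneg (deriv η y)]) (le_max_left M 1)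
  · have hy' : 6/5 < |y| := by linarith
    rw [st16_flat1_outer hη0 hy', st16_flat2_outer hη0 hy']
    simp [le_max_iff]

lemma st16_hasDerivAt_linear (η : ℝ → ℝ) (hη : Differentiable ℝ η) (a σ : ℝ) :
    HasDerivAt (fun s => η (a * s)) (a * deriv η (a * σ)) σ := by
  have h1 : HasDerivAt (fun s : ℝ => a * s) a σ := by
    simpa using (hasDerivAt_id σ).const_mul a
  have h2 := ((hη (a * σ)).hasDerivAt).comp σ h1
  simpa [Function.comp_def, mul_comm] using h2

lemma st16_deriv_linear (η : ℝ → ℝ) (hη : Differentiable ℝ η) (a σ : ℝ) :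
    deriv (fun s => η (a * s)) σ = a * deriv η (a * σ) :=
  (st16_hasDerivAt_linear η hη a σ).deriv

lemma st16_deriv2_linear (η : ℝ → ℝ) (hη : ContDiff ℝ (⊤ : ℕ∞) η) (a σ : ℝ) :
    deriv (fun s => deriv (fun s' => η (a * s')) s) σ = a^2 * deriv (deriv η) (a * σ) := by
  have h1 : (fun s => deriv (fun s' => η (a * s')) s) = fun s => a * deriv η (a * s) :=
    funext fun s => st16_deriv_linear η (st16_diff hη) a s
  rw [h1]
  have h2 : HasDerivAt (fun s => a * deriv η (a * s)) (a * (a * deriv (deriv η) (a * σ))) σ :=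
    (st16_hasDerivAt_linear (deriv η) (st16_diff (st16_deriv_smooth' hη)) a σ).const_mul a
  rw [h2.deriv]; ring

lemma st16_hasDerivAt_time (η : ℝ → ℝ) (hη : Differentiable ℝ η) (g σ τ : ℝ) :
    HasDerivAt (fun t => η (Real.exp (-g * t/5) * σ))
      (deriv η (Real.exp (-g * τ/5) * σ) * (Real.exp (-g * τ/5) * (-g/5) * σ)) τ := by
  have h1 : HasDerivAt (fun t : ℝ => -g * t / 5) (-g/5) τ := by
    simpa using ((hasDerivAt_id τ).const_mul (-g)).div_const 5
  have h2 := (h1.exp.mul_const σ)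
  have h3 := ((hη _).hasDerivAt).comp τ h2
  simpa [Function.comp_def, mul_assoc] using h3

lemma st16_deriv_time_zero (η : ℝ → ℝ) {g σ τ : ℝ}
    (h1 : |Real.exp (-g * τ/5) * σ| < 1 ∨ 6/5 < |Real.exp (-g * τ/5) * σ|)
    (hη1 : ∀ y : ℝ, |y| ≤ 1 → η y = 1) (hη0 : ∀ y : ℝ, 6/5 ≤ |y| → η y = 0) :
    deriv (fun t => η (Real.exp (-g * t/5) * σ)) τ = 0 := by
  have hcont : Continuous fun t : ℝ => |Real.exp (-g * t/5) * σ| := by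
    continuity
  rcases h1 with h | h
  · exact st16_flat_deriv (U := {t : ℝ | |Real.exp (-g * t/5) * σ| < 1})
      (isOpen_lt hcont continuous_const) h (fun t ht => hη1 _ (le_of_lt ht))
  · exact st16_flat_deriv (U := {t : ℝ | 6/5 < |Real.exp (-g * t/5) * σ|})
      (isOpen_lt continuous_const hcont) h (fun t ht => hη0 _ (le_of_lt ht))

end

lemma st16_absorb (j : ℕ) : ∃ C : ℝ, 1 ≤ C ∧ ∀ x : ℝ, |x|^j ≤ C * Real.exp (x^2/32) := by
  refine ⟨32^j * (Nat.factorial j) + 1, le_add_of_nonneg_left (by positivity), fun x => ?_⟩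
  have he : (1:ℝ) ≤ Real.exp (x^2/32) := Real.one_le_exp (by positivity)
  have hfac : (1:ℝ) ≤ (Nat.factorial j : ℝ) := by
    exact_mod_cast Nat.one_le_iff_ne_zero.mpr (Nat.factorial_ne_zero j)
  have hC : (0:ℝ) < 32^j * (Nat.factorial j : ℝ) := by positivity
  rcases le_or_gt (|x|) 1 with h | h
  · have : |x|^j ≤ 1 := pow_le_one₀ (abs_nonneg x) h
    nlinarith
  · have hb : |x| ≤ x^2 := by nlinarith [abs_nonneg x, sq_abs x]
    have h2 : |x|^j ≤ (x^2)^j := pow_le_pow_left₀ (abs_nonneg x) hb j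
    have h3 := Real.pow_div_factorial_le_exp (x := x^2/32) (by positivity) j
    have h4 : (x^2/32)^j ≤ (Nat.factorial j : ℝ) * Real.exp (x^2/32) := by
      rw [div_le_iff₀ (by positivity : (0:ℝ) < (Nat.factorial j:ℝ))] at h3
      linarith [h3]
    have h5 : (x^2)^j = 32^j * (x^2/32)^j := by
      rw [div_pow]; field_simp
    nlinarith [Real.exp_pos (x^2/32), pow_pos (by norm_num : (0:ℝ) < 32) j]

lemma st16_sq_le_exp {x : ℝ} (hx : 0 ≤ x) : x^2/2 ≤ Real.exp x := by
  nlinarith [Real.quadratic_le_exp_of_nonneg hx]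

lemma st16_seg {v : ℝ → ℝ} {L p σq B : ℝ} (hv : ContDiffOn ℝ 2 v (Ioo (-L) L))
    (hsub : uIcc p σq ⊆ Ioo (-L) L)
    (hpos : ∀ s ∈ uIcc p σq, 1/2 ≤ 1 + v s)
    (hB : ∀ s ∈ uIcc p σq, |deriv v s| ≤ B) :
    IntervalIntegrable (fun s => deriv (deriv v) s / (1 + v s)) MeasureTheory.volume p σq ∧
      |∫ s in p..σq, deriv (deriv v) s / (1 + v s)| ≤ 4*B + 4*B^2 * |σq - p| := by
  have hO : IsOpen (Ioo (-L) L) := isOpen_Ioo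
  have hd1 : ∀ x ∈ Ioo (-L) L, HasDerivAt v (deriv v x) x := fun x hx =>
    ((hv.differentiableOn (by norm_num)).differentiableAt (hO.mem_nhds hx)).hasDerivAt
  have h2 : ContDiffOn ℝ 1 (deriv v) (Ioo (-L) L) :=
    hv.deriv_of_isOpen hO (by norm_num)
  have hd2 : ∀ x ∈ Ioo (-L) L, HasDerivAt (deriv v) (deriv (deriv v) x) x := fun x hx =>
    ((h2.differentiableOn (by norm_num)).differentiableAt (hO.mem_nhds hx)).hasDerivAt
  have hc2 : ContinuousOn (deriv (deriv v)) (Ioo (-L) L) :=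
    h2.continuousOn_deriv_of_isOpen hO le_rfl
  have hc1 : ContinuousOn (deriv v) (Ioo (-L) L) := h2.continuousOn
  have hcv : ContinuousOn v (Ioo (-L) L) := hv.continuousOn
  have hB0 : 0 ≤ B := le_trans (abs_nonneg _) (hB p left_mem_uIcc)
  have hne : ∀ s ∈ uIcc p σq, 1 + v s ≠ 0 := fun s hs => by linarith [hpos s hs]
  have hcI : ContinuousOn (fun s => deriv (deriv v) s / (1 + v s)) (uIcc p σq) :=
    (hc2.mono hsub).div (continuousOn_const.add (hcv.mono hsub)) hne
  have hcQ : ContinuousOn (fun s => (deriv v s)^2 / (1 + v s)^2) (uIcc p σq) :=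
    ((hc1.mono hsub).pow 2).div (((continuousOn_const.add (hcv.mono hsub))).pow 2)
      (fun s hs => pow_ne_zero 2 (hne s hs))
  have hcD : ContinuousOn (fun s =>
      (deriv (deriv v) s * (1 + v s) - deriv v s * deriv v s) / (1 + v s)^2) (uIcc p σq) :=
    (((hc2.mono hsub).mul (continuousOn_const.add (hcv.mono hsub))).sub
      ((hc1.mono hsub).mul (hc1.mono hsub))).div
      (((continuousOn_const.add (hcv.mono hsub))).pow 2) (fun s hs => pow_ne_zero 2 (hne s hs))
  have hiI := hcI.intervalIntegrable (μ := MeasureTheory.volume)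
  have hiQ := hcQ.intervalIntegrable (μ := MeasureTheory.volume)
  have hiD := hcD.intervalIntegrable (μ := MeasureTheory.volume)
  refine ⟨hiI, ?_⟩
  have hF : ∀ s ∈ uIcc p σq, HasDerivAt (fun y => deriv v y / (1 + v y))
      ((deriv (deriv v) s * (1 + v s) - deriv v s * deriv v s) / (1 + v s)^2) s := by
    intro s hs
    exact (hd2 s (hsub hs)).div ((hd1 s (hsub hs)).const_add 1) (hne s hs)
  have hid : EqOn (fun s => deriv (deriv v) s / (1 + v s))
      (fun s => (deriv (deriv v) s * (1 + v s) - deriv v s * deriv v s) / (1 + v s)^2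
        + (deriv v s)^2 / (1 + v s)^2) (uIcc p σq) := by
    intro s hs
    have h0 := hne s hs
    field_simp
    ring
  have hsplit : (∫ s in p..σq, deriv (deriv v) s / (1 + v s))
      = (deriv v σq / (1 + v σq) - deriv v p / (1 + v p))
        + ∫ s in p..σq, (deriv v s)^2 / (1 + v s)^2 := by
    rw [intervalIntegral.integral_congr hid, intervalIntegral.integral_add hiD hiQ,
      intervalIntegral.integral_eq_sub_of_hasDerivAt hF hiD]
  rw [hsplit]
  have hbd : ∀ s ∈ uIcc p σq, |deriv v s / (1 + v s)| ≤ 2 * B := by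
    intro s hs
    have h1 := hpos s hs
    have h2' := hB s hs
    rw [abs_div, abs_of_nonneg (by linarith : (0:ℝ) ≤ 1 + v s)]
    rw [div_le_iff₀ (by linarith : (0:ℝ) < 1 + v s)]
    nlinarith [abs_nonneg (deriv v s)]
  have hQbd : |∫ s in p..σq, (deriv v s)^2 / (1 + v s)^2| ≤ 4*B^2 * |σq - p| := by
    have key : ∀ x ∈ Set.uIoc p σq, ‖(deriv v x)^2 / (1 + v x)^2‖ ≤ 4*B^2 := by
      intro x hx
      have hx' : x ∈ uIcc p σq := uIoc_subset_uIcc hx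
      have h1 := hpos x hx'
      have h2' := hB x hx'
      rw [Real.norm_eq_abs, abs_div, abs_of_nonneg (sq_nonneg _),
        abs_of_nonneg (sq_nonneg _), div_le_iff₀ (by nlinarith : (0:ℝ) < (1 + v x)^2)]
      have hB2 : (deriv v x)^2 ≤ B^2 := by nlinarith [sq_abs (deriv v x), abs_nonneg (deriv v x)]
      have h4 : (1:ℝ)/4 ≤ (1 + v x)^2 := by nlinarith
      nlinarith [mul_le_mul_of_nonneg_left h4 (show (0:ℝ) ≤ 4*B^2 by positivity)]
    have := intervalIntegral.norm_integral_le_of_norm_le_const key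
    rwa [Real.norm_eq_abs] at this
  have h1 := hbd σq right_mem_uIcc
  have h2' := hbd p left_mem_uIcc
  calc |deriv v σq / (1 + v σq) - deriv v p / (1 + v p)
        + ∫ s in p..σq, (deriv v s)^2 / (1 + v s)^2|
      ≤ |deriv v σq / (1 + v σq) - deriv v p / (1 + v p)|
        + |∫ s in p..σq, (deriv v s)^2 / (1 + v s)^2| := abs_add_le _ _
    _ ≤ (|deriv v σq / (1 + v σq)| + |deriv v p / (1 + v p)|)
        + |∫ s in p..σq, (deriv v s)^2 / (1 + v s)^2| := by
          linarith [abs_sub (deriv v σq / (1 + v σq)) (deriv v p / (1 + v p))]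
    _ ≤ 4*B + 4*B^2 * |σq - p| := by linarith

lemma st16_Iop_split {v : ℝ → ℝ} {p σq : ℝ}
    (hseg : IntervalIntegrable (fun s => deriv (deriv v) s / (1 + v s)) MeasureTheory.volume p σq)
    (hup : uIcc 0 p ⊆ uIcc 0 σq) :
    |Iop v σq| ≤ |Iop v p| + |∫ s in p..σq, deriv (deriv v) s / (1 + v s)| := by
  by_cases h0 : IntervalIntegrable (fun s => deriv (deriv v) s / (1 + v s))
      MeasureTheory.volume 0 p
  · have : Iop v σq = Iop v p + ∫ s in p..σq, deriv (deriv v) s / (1 + v s) := by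
      rw [Iop, Iop, intervalIntegral.integral_add_adjacent_intervals h0 hseg]
    rw [this]
    exact abs_add_le _ _
  · have h1 : ¬ IntervalIntegrable (fun s => deriv (deriv v) s / (1 + v s))
        MeasureTheory.volume 0 σq := fun h => h0 (h.mono_set hup)
    rw [Iop, intervalIntegral.integral_undef h1, abs_zero]
    positivity

lemma st16_Nloc_bound {n : ℕ} {v : ℝ → ℝ} {σ : ℝ} (hn : 1 ≤ n) (hpos : 1/2 ≤ 1 + v σ) :
    |Nloc n v σ| ≤ 2*(n:ℝ)*(deriv v σ)^2 + (v σ)^2 := by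
  rw [Nloc]
  have hn1 : (1:ℝ) ≤ (n:ℝ) := by exact_mod_cast hn
  rw [abs_div, abs_of_nonneg (by linarith : (0:ℝ) ≤ 2 * (1 + v σ)),
    div_le_iff₀ (by linarith : (0:ℝ) < 2 * (1 + v σ))]
  have habs : |2 * ((n:ℝ) - 1) * (deriv v σ)^2 - (v σ)^2|
      ≤ 2*((n:ℝ)-1)*(deriv v σ)^2 + (v σ)^2 := by
    rw [abs_sub_comm]
    refine le_trans (abs_sub _ _) ?_
    rw [abs_of_nonneg (sq_nonneg _), abs_of_nonneg (by nlinarith [sq_nonneg (deriv v σ)])]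
    linarith
  nlinarith [sq_nonneg (deriv v σ), sq_nonneg (v σ),
    mul_nonneg (show (0:ℝ) ≤ 2*(n:ℝ)*(deriv v σ)^2 + (v σ)^2 by positivity)
      (show (0:ℝ) ≤ 2*(1+v σ)-1 by linarith)]

set_option maxHeartbeats 1000000 in
/-- the weighted `L²` bound `∥(∂_τ - 𝒜)v̌∥_𝔥 ≤ C₂ e^{-(3/2)μ_k τ}`. -/
theorem stmt16 (n k : ℕ) (hn : 2 ≤ n) (hk : 3 ≤ k)
    (η : ℝ → ℝ) (hηsmooth : ContDiff ℝ (⊤ : ℕ∞) η)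
    (hηeven : ∀ y : ℝ, η (-y) = η y)
    (hηrange : ∀ y : ℝ, η y ∈ Set.Icc (0:ℝ) 1)
    (hη1 : ∀ y : ℝ, |y| ≤ 1 → η y = 1)
    (hη0 : ∀ y : ℝ, 6/5 ≤ |y| → η y = 0)
    (P : ℝ) (hP : 1 ≤ P)
    (C0hat Cm Cp Cm' Cp' : ℝ) (hC0hat : 0 < C0hat)
    (hCm : 0 < Cm) (hCp : 0 < Cp) (hCm' : 0 < Cm') (hCp' : 0 < Cp') :
    ∃ C₂ τ₁₀ : ℝ, ∀ τ : ℝ, τ₁₀ ≤ τ →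
      ∀ v : ℝ → ℝ,
        ContDiffOn ℝ 2 v
          (Set.Icc (-(6/5 * Real.exp (gam k * τ/5))) (6/5 * Real.exp (gam k * τ/5))) →
        (∀ σ : ℝ, 6/5 * Real.exp (gam k * τ/5) < |σ| → v σ = 0) →
        (∀ σ : ℝ, |σ| ≤ P →
          |Nloc n v σ - (n:ℝ) * deriv v σ * Iop v σ|
            ≤ C0hat * Real.exp (-(3/2) * mu k * τ)) →
        (∀ σ : ℝ, P ≤ |σ| → |σ| ≤ 6/5 * Real.exp (gam k * τ/5) →
          1/2 ≤ 1 + v σ ∧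
          Cm * |σ|^k ≤ Real.exp (mu k * τ) * |v σ| ∧
          Real.exp (mu k * τ) * |v σ| ≤ Cp * |σ|^k ∧
          Cm' * |σ|^(k-1) ≤ Real.exp (mu k * τ) * |deriv v σ| ∧
          Real.exp (mu k * τ) * |deriv v σ| ≤ Cp' * |σ|^(k-1)) →
        Real.sqrt (∫ σ : ℝ, (Gfun n k η v τ σ)^2 * Real.exp (-σ^2/4))
          ≤ C₂ * Real.exp (-(3/2) * mu k * τ) := by
  -- numeric facts about `gam` and `mu`
  have hk3 : (3:ℝ) ≤ (k:ℝ) := by exact_mod_cast hk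
  have hkpos : (0:ℝ) < (k:ℝ) := by linarith
  have hg : (1:ℝ)/6 ≤ gam k := by
    rw [gam]
    have : 1/(k:ℝ) ≤ 1/3 := by
      rw [div_le_div_iff₀ hkpos (by norm_num)]; linarith
    linarith
  have hg0 : 0 < gam k := by linarith
  have hgle : gam k ≤ 1/2 := by
    rw [gam]; have : 0 < 1/(k:ℝ) := by positivity
    linarith
  have hm : (1:ℝ)/2 ≤ mu k := by rw [mu]; linarith
  have hm0 : 0 < mu k := by linarith
  -- constants
  obtain ⟨M, hM1, hM⟩ := st16_bound hηsmooth hη0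
  obtain ⟨Cabs, hCabs1, hCabs⟩ := st16_absorb (4*k)
  set K1 : ℝ := 2*(n:ℝ)*Cp'^2 + Cp^2 with hK1def
  set D0 : ℝ := (C0hat + K1 * P^(2*k)) / ((n:ℝ) * Cm') with hD0def
  set K2 : ℝ := K1 + (n:ℝ)*Cp'*(D0 + 4*Cp' + 8*Cp'^2) with hK2def
  set K3 : ℝ := M*(3*Cp + 2*Cp') with hK3def
  have hn0 : (0:ℝ) < (n:ℝ) := by positivity
  have hn2 : (2:ℝ) ≤ (n:ℝ) := by exact_mod_cast hn
  have hK1pos : 0 < K1 := by rw [hK1def]; positivity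
  have hD0pos : 0 < D0 := by rw [hD0def]; positivity
  have hK2pos : 0 < K2 := by rw [hK2def]; positivity
  have hK3pos : 0 < K3 := by
    rw [hK3def]
    exact mul_pos (lt_of_lt_of_le one_pos hM1) (by positivity)
  set Cstar : ℝ := max C0hat ((K2 + K3) * Cabs) with hCstardef
  have hCstar : 0 < Cstar := lt_of_lt_of_le hC0hat (le_max_left _ _)
  refine ⟨3 * Cstar, max (5 * Real.log (2*P) / gam k) (200 * mu k / (gam k)^2), ?_⟩
  intro τ hτ v hcd hzero hi hii
  -- time bounds
  have hτa : 200 * mu k / (gam k)^2 ≤ τ := le_trans (le_max_right _ _) hτ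
  have hτb : 5 * Real.log (2*P) / gam k ≤ τ := le_trans (le_max_left _ _) hτ
  have hτ0 : 0 ≤ τ := le_trans (by positivity) hτa
  have hP2 : 2*P ≤ Real.exp (gam k * τ/5) := by
    have h1 : Real.log (2*P) ≤ gam k * τ/5 := by
      rw [div_le_iff₀ hg0] at hτb
      linarith
    calc 2*P = Real.exp (Real.log (2*P)) := (Real.exp_log (by positivity)).symm
      _ ≤ _ := Real.exp_le_exp.mpr h1
  have hgrow : 16 * mu k * τ ≤ Real.exp (2*(gam k)*τ/5) := by
    have h1 := st16_sq_le_exp (show (0:ℝ) ≤ 2*(gam k)*τ/5 by positivity)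
    have h2 : 200 * mu k ≤ τ * (gam k)^2 := by
      rw [div_le_iff₀ (by positivity)] at hτa
      linarith
    linarith only [h1, mul_le_mul_of_nonneg_right h2 hτ0]
  -- notation
  set L : ℝ := 6/5 * Real.exp (gam k * τ/5) with hLdef
  set a : ℝ := Real.exp (-gam k * τ/5) with hadef
  set E : ℝ := Real.exp (-(mu k * τ)) with hEdef
  set e1 : ℝ := Real.exp (-(mu k * τ)/2) with he1def
  set e3 : ℝ := Real.exp (-(3/2) * mu k * τ) with he3def
  have hE0 : 0 < E := Real.exp_pos _
  have he10 : 0 < e1 := Real.exp_pos _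
  have he30 : 0 < e3 := Real.exp_pos _
  have ha0 : 0 < a := Real.exp_pos _
  have ha1 : a ≤ 1 := Real.exp_le_one_iff.mpr (by nlinarith only [hg0.le, hτ0])
  have hae : a * Real.exp (gam k * τ/5) = 1 := by
    rw [hadef, ← Real.exp_add, show -gam k * τ/5 + gam k * τ/5 = 0 by ring, Real.exp_zero]
  have haL : a * L = 6/5 := by
    rw [hLdef]
    calc a * (6/5 * Real.exp (gam k * τ/5)) = 6/5 * (a * Real.exp (gam k * τ/5)) := by ring
      _ = 6/5 := by rw [hae]; ring
  have hL0 : 0 < L := by rw [hLdef]; positivity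
  have hEinv : E * Real.exp (mu k * τ) = 1 := by
    rw [hEdef, ← Real.exp_add, show -(mu k * τ) + mu k * τ = 0 by ring, Real.exp_zero]
  have hEe1 : E ≤ e1 := Real.exp_le_exp.mpr (by nlinarith only [hm0.le, hτ0])
  have hE1 : E ≤ 1 := Real.exp_le_one_iff.mpr (by nlinarith only [hm0.le, hτ0])
  have hEe3 : E * e1 = e3 := by
    rw [hEdef, he1def, he3def, ← Real.exp_add]; congr 1; ring
  have hE2 : E^2 ≤ e3 := by
    rw [pow_two]
    exact le_of_le_of_eq (mul_le_mul_of_nonneg_left hEe1 hE0.le) hEe3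
  have hE3 : E^3 ≤ e3 := by
    calc E^3 = E^2 * E := by ring
      _ ≤ e3 * E := mul_le_mul_of_nonneg_right hE2 hE0.le
      _ ≤ e3 * 1 := mul_le_mul_of_nonneg_left hE1 he30.le
      _ = e3 := mul_one e3
  have he3E : e3 ≤ e1 := by
    rw [← hEe3]
    calc E * e1 ≤ 1 * e1 := mul_le_mul_of_nonneg_right hE1 he10.le
      _ = e1 := one_mul e1
  -- pointwise bounds from hypothesis (ii)
  have hvs : ∀ s : ℝ, P ≤ |s| → |s| ≤ L → |v s| ≤ Cp * |s|^k * E ∧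
      |deriv v s| ≤ Cp' * |s|^(k-1) * E ∧ Cm' * |s|^(k-1) * E ≤ |deriv v s| ∧
      1/2 ≤ 1 + v s := by
    intro s h1 h2
    obtain ⟨q1, q2, q3, q4, q5⟩ := hii s h1 h2
    have e1' : |v s| = E * (Real.exp (mu k * τ) * |v s|) := by
      rw [← mul_assoc, hEinv, one_mul]
    have e2' : |deriv v s| = E * (Real.exp (mu k * τ) * |deriv v s|) := by
      rw [← mul_assoc, hEinv, one_mul]
    refine ⟨?_, ?_, ?_, q1⟩
    · rw [e1']
      calc E * (Real.exp (mu k * τ) * |v s|) ≤ E * (Cp * |s|^k) :=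
            mul_le_mul_of_nonneg_left q3 hE0.le
        _ = Cp * |s|^k * E := by ring
    · rw [e2']
      calc E * (Real.exp (mu k * τ) * |deriv v s|) ≤ E * (Cp' * |s|^(k-1)) :=
            mul_le_mul_of_nonneg_left q5 hE0.le
        _ = Cp' * |s|^(k-1) * E := by ring
    · rw [e2']
      calc Cm' * |s|^(k-1) * E = E * (Cm' * |s|^(k-1)) := by ring
        _ ≤ E * (Real.exp (mu k * τ) * |deriv v s|) := mul_le_mul_of_nonneg_left q4 hE0.le
  clear_value K1 D0 K2 K3 Cstar L a E e1 e3
  -- the key pointwise bound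
  have key : ∀ σ : ℝ, |σ| ≠ L →
      |Gfun n k η v τ σ| ≤ Cstar * (e3 * Real.exp (σ^2/16)) := by
    intro σ hσne
    have hexp1 : (1:ℝ) ≤ Real.exp (σ^2/16) := Real.one_le_exp (by positivity)
    have hd1' : deriv (fun s => η (a * s)) σ = a * deriv η (a * σ) :=
      st16_deriv_linear η (st16_diff hηsmooth) a σ
    have hd2' : deriv (fun s => deriv (fun s' => η (a * s')) s) σ
        = a^2 * deriv (deriv η) (a * σ) := st16_deriv2_linear η hηsmooth a σ
    simp only [Gfun]
    rw [← hadef, hd1', hd2']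
    rcases hσne.lt_or_gt with hin | hout
    swap
    · -- outer region : everything vanishes
      have hvz : v σ = 0 := hzero σ hout
      have hdz : deriv v σ = 0 :=
        st16_flat_deriv (U := {x : ℝ | L < |x|})
          (isOpen_lt continuous_const continuous_abs) hout hzero
      have hηz : η (a * σ) = 0 := by
        apply hη0
        rw [abs_mul, abs_of_pos ha0]
        linarith only [mul_lt_mul_of_pos_left hout ha0, haL]
      rw [hvz, hdz, hηz]
      simp only [zero_mul, mul_zero, sub_zero, add_zero, abs_zero]
      exact mul_nonneg hCstar.le (mul_nonneg he30.le (Real.exp_pos _).le)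
    -- inner region : |σ| < L
    by_cases hA : |σ| ≤ P
    · -- region A : |σ| ≤ P
      have haP : |a * σ| < 1 := by
        rw [abs_mul, abs_of_pos ha0]
        have h1 : a * (2*P) ≤ 1 := by
          calc a * (2*P) ≤ a * Real.exp (gam k * τ/5) :=
                mul_le_mul_of_nonneg_left hP2 ha0.le
            _ = 1 := hae
        linarith only [h1, mul_le_mul_of_nonneg_left hA ha0.le]
      have z1 : deriv η (a*σ) = 0 := st16_flat1_inner hη1 haP
      have z2 : deriv (deriv η) (a*σ) = 0 := st16_flat2_inner hη1 haP
      have zτ : deriv (fun t => η (Real.exp (-gam k * t/5) * σ)) τ = 0 := by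
        apply st16_deriv_time_zero η (Or.inl ?_) hη1 hη0
        rw [← hadef]; exact haP
      have hη1' : η (a*σ) = 1 := hη1 _ haP.le
      rw [z1, z2, zτ, hη1']
      simp only [mul_zero, zero_mul, sub_zero, add_zero, zero_sub, neg_zero, zero_add, one_mul]
      have hCC : C0hat ≤ Cstar := by rw [hCstardef]; exact le_max_left _ _
      calc |Nloc n v σ - (n:ℝ) * deriv v σ * Iop v σ| ≤ C0hat * e3 := hi σ hA
        _ ≤ Cstar * e3 := mul_le_mul_of_nonneg_right hCC he30.le
        _ = Cstar * (e3 * 1) := by ring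
        _ ≤ Cstar * (e3 * Real.exp (σ^2/16)) :=
            mul_le_mul_of_nonneg_left (mul_le_mul_of_nonneg_left hexp1 he30.le) hCstar.le
    · -- region B : P < |σ| < L
      push_neg at hA
      have hPabs : P ≤ |σ| := hA.le
      have hσ1 : (1:ℝ) ≤ |σ| := le_trans hP hPabs
      have hσL : |σ| ≤ L := hin.le
      set Q : ℝ := |σ|^k with hQdef
      set R : ℝ := |σ|^(4*k) with hRdef
      have hQ1 : (1:ℝ) ≤ Q := one_le_pow₀ hσ1
      have hQ0 : (0:ℝ) < Q := by linarith only [hQ1]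
      have hσQ : |σ| ≤ Q := by
        rw [hQdef]; exact le_self_pow₀ hσ1 (by omega)
      have hkk : |σ|^(k-1) ≤ Q := by
        rw [hQdef]; exact pow_le_pow_right₀ hσ1 (Nat.sub_le k 1)
      have hQ2R : Q^2 ≤ R := by
        rw [hQdef, hRdef, ← pow_mul]; exact pow_le_pow_right₀ hσ1 (by omega)
      have hQR : Q ≤ R := by
        rw [hQdef, hRdef]; exact pow_le_pow_right₀ hσ1 (by omega)
      have hQ3R : Q^3 * |σ| ≤ R := by
        rw [hQdef, hRdef, ← pow_mul, ← pow_succ]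
        exact pow_le_pow_right₀ hσ1 (by omega)
      have hR0 : (0:ℝ) < R := by rw [hRdef]; positivity
      clear_value Q R
      obtain ⟨hvb, hv'b, hv'lb, hvpos⟩ := hvs σ hPabs hσL
      have hv'Q : |deriv v σ| ≤ Cp' * Q * E :=
        le_trans hv'b
          (mul_le_mul_of_nonneg_right (mul_le_mul_of_nonneg_left hkk hCp'.le) hE0.le)
      have hvQ : |v σ| ≤ Cp * Q * E := by rw [hQdef]; exact hvb
      have hNσ : |Nloc n v σ| ≤ K1 * (Q^2 * E^2) := by
        have h1 := st16_Nloc_bound (n := n) (v := v) (σ := σ) (by omega) hvpos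
        have h2 : (deriv v σ)^2 ≤ (Cp' * Q * E)^2 := by
          rw [← sq_abs]; exact pow_le_pow_left₀ (abs_nonneg _) hv'Q 2
        have h3 : (v σ)^2 ≤ (Cp * Q * E)^2 := by
          rw [← sq_abs]; exact pow_le_pow_left₀ (abs_nonneg _) hvQ 2
        have h4 := mul_le_mul_of_nonneg_left h2 (show (0:ℝ) ≤ 2*(n:ℝ) by positivity)
        rw [hK1def]
        linarith only [h1, h3, h4]
      -- choice of the inner endpoint p
      obtain ⟨p, hpabs, hpI, hup⟩ : ∃ p : ℝ, |p| = P ∧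
          (∀ s ∈ uIcc p σ, P ≤ |s| ∧ |s| ≤ |σ|) ∧ uIcc 0 p ⊆ uIcc 0 σ := by
        rcases le_or_gt 0 σ with hs | hs
        · have hσeq : |σ| = σ := abs_of_nonneg hs
          have hPσ : P ≤ σ := by rw [← hσeq]; exact hPabs
          refine ⟨P, abs_of_pos (by linarith only [hP]), ?_, ?_⟩
          · intro s hsmem
            rw [uIcc_of_le hPσ] at hsmem
            have h1 : P ≤ s := hsmem.1
            have h2 : s ≤ σ := hsmem.2
            rw [abs_of_nonneg (by linarith only [h1, hP])]
            exact ⟨h1, by rw [← hσeq] at h2; exact h2⟩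
          · apply uIcc_subset_uIcc left_mem_uIcc
            rw [uIcc_of_le hs]
            exact ⟨by linarith only [hP], hPσ⟩
        · have hσeq : |σ| = -σ := abs_of_neg hs
          have hPσ : σ ≤ -P := by linarith only [hPabs, hσeq.symm.le, hσeq.ge, hσeq.le]
          refine ⟨-P, by rw [abs_neg]; exact abs_of_pos (by linarith only [hP]), ?_, ?_⟩
          · intro s hsmem
            rw [uIcc_of_ge hPσ] at hsmem
            have h1 : σ ≤ s := hsmem.1
            have h2 : s ≤ -P := hsmem.2
            rw [abs_of_nonpos (by linarith only [h2, hP])]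
            constructor
            · linarith only [h2]
            · rw [hσeq]; linarith only [h1]
          · apply uIcc_subset_uIcc left_mem_uIcc
            rw [uIcc_of_ge hs.le]
            exact ⟨hPσ, by linarith only [hP]⟩
      have hsub : uIcc p σ ⊆ Ioo (-L) L := by
        intro s hsmem
        have := (hpI s hsmem).2
        exact abs_lt.mp (lt_of_le_of_lt this hin)
      have hcd' : ContDiffOn ℝ 2 v (Ioo (-L) L) := hcd.mono Ioo_subset_Icc_self
      have hpos' : ∀ s ∈ uIcc p σ, 1/2 ≤ 1 + v s := fun s hsmem =>
        (hvs s (hpI s hsmem).1 (le_trans (hpI s hsmem).2 hσL)).2.2.2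
      have hBs : ∀ s ∈ uIcc p σ, |deriv v s| ≤ Cp' * Q * E := by
        intro s hsmem
        have h1 := (hvs s (hpI s hsmem).1 (le_trans (hpI s hsmem).2 hσL)).2.1
        have h2 : |s|^(k-1) ≤ Q :=
          le_trans (pow_le_pow_left₀ (abs_nonneg s) (hpI s hsmem).2 (k-1)) hkk
        exact le_trans h1
          (mul_le_mul_of_nonneg_right (mul_le_mul_of_nonneg_left h2 hCp'.le) hE0.le)
      obtain ⟨hseg, hsegbd⟩ := st16_seg hcd' hsub hpos' hBs
      have hIσsplit := st16_Iop_split hseg hup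
      -- bound on |Iop v p|
      have hpP : P ≤ |p| := le_of_eq hpabs.symm
      have hpL : |p| ≤ L := by
        rw [hpabs, hLdef]
        linarith only [hP2, (Real.exp_pos (gam k * τ/5)).le, hP]
      obtain ⟨hvbp, hv'bp, hv'lbp, hvposp⟩ := hvs p hpP hpL
      have hPk1 : (1:ℝ) ≤ P^(k-1) := one_le_pow₀ hP
      have hP0 : (0:ℝ) ≤ P := by linarith only [hP]
      have hv'plb : Cm' * E ≤ |deriv v p| := by
        rw [hpabs] at hv'lbp
        calc Cm' * E = Cm' * 1 * E := by ring
          _ ≤ Cm' * P^(k-1) * E :=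
            mul_le_mul_of_nonneg_right (mul_le_mul_of_nonneg_left hPk1 hCm'.le) hE0.le
          _ ≤ |deriv v p| := hv'lbp
      have hPkk : P^(k-1) ≤ P^k := pow_le_pow_right₀ hP (Nat.sub_le k 1)
      have hP2k : P^k * P^k = P^(2*k) := by rw [← pow_add]; congr 1; omega
      have hNp : |Nloc n v p| ≤ K1 * (P^(2*k) * E^2) := by
        have h1 := st16_Nloc_bound (n := n) (v := v) (σ := p) (by omega) hvposp
        rw [hpabs] at hvbp hv'bp
        have h2 : (deriv v p)^2 ≤ (Cp' * P^k * E)^2 := by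
          rw [← sq_abs]
          refine pow_le_pow_left₀ (abs_nonneg _) ?_ 2
          exact le_trans hv'bp
            (mul_le_mul_of_nonneg_right (mul_le_mul_of_nonneg_left hPkk hCp'.le) hE0.le)
        have h3 : (v p)^2 ≤ (Cp * P^k * E)^2 := by
          rw [← sq_abs]; exact pow_le_pow_left₀ (abs_nonneg _) hvbp 2
        have h4 := mul_le_mul_of_nonneg_left h2 (show (0:ℝ) ≤ 2*(n:ℝ) by positivity)
        rw [hK1def, ← hP2k]
        linarith only [h1, h3, h4]
      have hiip := hi p (le_of_eq hpabs)
      have hIp : |Iop v p| ≤ D0 * e1 := by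
        have heq : |(n:ℝ)*(deriv v p)*(Iop v p)| = (n:ℝ) * (|deriv v p| * |Iop v p|) := by
          rw [abs_mul, abs_mul, Nat.abs_cast]; ring
        have habs : (n:ℝ) * (|deriv v p| * |Iop v p|)
            ≤ |Nloc n v p - (n:ℝ)*(deriv v p)*(Iop v p)| + |Nloc n v p| := by
          rw [← heq]
          have h1 : (n:ℝ)*(deriv v p)*(Iop v p)
              = Nloc n v p - (Nloc n v p - (n:ℝ)*(deriv v p)*(Iop v p)) := by ring
          have h2 := congrArg (fun z : ℝ => |z|) h1
          linarith only [h2, abs_sub (Nloc n v p)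
            (Nloc n v p - (n:ℝ)*(deriv v p)*(Iop v p))]
        have h5 : (n:ℝ) * (|deriv v p| * |Iop v p|) ≤ C0hat * e3 + K1 * (P^(2*k) * E^2) :=
          by linarith only [habs, hiip, hNp]
        have he3e : e3 = e1 * E := by rw [← hEe3]; ring
        have hE2e : E^2 ≤ e1 * E := by
          rw [pow_two]; exact mul_le_mul_of_nonneg_right hEe1 hE0.le
        have h7 := mul_le_mul_of_nonneg_left hE2e
          (mul_nonneg hK1pos.le (pow_nonneg hP0 (2*k)))
        have h6 : (n:ℝ) * (Cm' * E * |Iop v p|) ≤ (C0hat + K1*P^(2*k)) * (e1 * E) := by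
          have hmono2 : (n:ℝ) * ((Cm'*E) * |Iop v p|) ≤ (n:ℝ) * (|deriv v p| * |Iop v p|) :=
            mul_le_mul_of_nonneg_left
              (mul_le_mul_of_nonneg_right hv'plb (abs_nonneg _)) hn0.le
          calc (n:ℝ) * (Cm' * E * |Iop v p|) ≤ C0hat * e3 + K1 * (P^(2*k) * E^2) := by
                linarith only [hmono2, h5]
            _ ≤ C0hat * (e1*E) + K1*P^(2*k)*(e1*E) := by rw [he3e]; linarith only [h7]
            _ = (C0hat + K1*P^(2*k)) * (e1*E) := by ring
        have h8 : |Iop v p| * ((n:ℝ)*Cm'*E) ≤ (D0 * e1) * ((n:ℝ)*Cm'*E) := by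
          have hD0e : (D0*e1) * ((n:ℝ)*Cm'*E) = (C0hat + K1*P^(2*k)) * (e1*E) := by
            rw [hD0def]; field_simp
          rw [hD0e]
          calc |Iop v p| * ((n:ℝ)*Cm'*E) = (n:ℝ) * (Cm' * E * |Iop v p|) := by ring
            _ ≤ _ := h6
        exact le_of_mul_le_mul_right h8 (mul_pos (mul_pos hn0 hCm') hE0)
      -- bound on |Iop v σ|
      have hIσ : |Iop v σ| ≤ D0*e1 + 4*(Cp'*Q*E) + 8*Cp'^2*Q^2*E^2*|σ| := by
        have h8 : |σ - p| ≤ 2*|σ| := by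
          calc |σ - p| ≤ |σ| + |p| := abs_sub σ p
            _ ≤ 2*|σ| := by rw [hpabs]; linarith only [hPabs]
        have h9 : 4*(Cp'*Q*E)^2*|σ - p| ≤ 8*Cp'^2*Q^2*E^2*|σ| := by
          have := mul_le_mul_of_nonneg_left h8
            (show (0:ℝ) ≤ 4*(Cp'*Q*E)^2 by positivity)
          linarith only [this]
        calc |Iop v σ| ≤ |Iop v p| + |∫ s in p..σ, deriv (deriv v) s / (1 + v s)| := hIσsplit
          _ ≤ D0*e1 + (4*(Cp'*Q*E) + 4*(Cp'*Q*E)^2*|σ - p|) := by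
              linarith only [hsegbd, hIp]
          _ ≤ D0*e1 + 4*(Cp'*Q*E) + 8*Cp'^2*Q^2*E^2*|σ| := by linarith only [h9]
      -- bound on the main term
      have hX : |Nloc n v σ - (n:ℝ)*(deriv v σ)*(Iop v σ)| ≤ K2 * (R * e3) := by
        have heq : |(n:ℝ)*(deriv v σ)*(Iop v σ)| = (n:ℝ) * (|deriv v σ| * |Iop v σ|) := by
          rw [abs_mul, abs_mul, Nat.abs_cast]; ring
        have t0 : |Nloc n v σ - (n:ℝ)*(deriv v σ)*(Iop v σ)|
            ≤ |Nloc n v σ| + (n:ℝ)*(|deriv v σ| * |Iop v σ|) := by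
          rw [← heq]
          exact abs_sub _ _
        have t1 : |deriv v σ| * |Iop v σ|
            ≤ (Cp'*Q*E) * (D0*e1 + 4*(Cp'*Q*E) + 8*Cp'^2*Q^2*E^2*|σ|) :=
          mul_le_mul hv'Q hIσ (abs_nonneg _) (mul_nonneg (mul_nonneg hCp'.le hQ0.le) hE0.le)
        have t1' := mul_le_mul_of_nonneg_left t1 hn0.le
        have hQe3a : Q * (E*e1) ≤ R * e3 := by
          rw [hEe3]; exact mul_le_mul_of_nonneg_right hQR he30.le
        have hQe3b : Q^2 * E^2 ≤ R * e3 :=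
          mul_le_mul hQ2R hE2 (by positivity) hR0.le
        have hQe3c : (Q^3*|σ|) * E^3 ≤ R * e3 :=
          mul_le_mul hQ3R hE3 (pow_nonneg hE0.le 3) hR0.le
        calc |Nloc n v σ - (n:ℝ)*(deriv v σ)*(Iop v σ)|
            ≤ K1*(Q^2*E^2)
              + (n:ℝ)*((Cp'*Q*E) * (D0*e1 + 4*(Cp'*Q*E) + 8*Cp'^2*Q^2*E^2*|σ|)) := by
              linarith only [t0, t1', hNσ]
          _ = K1*(Q^2*E^2) + (n:ℝ)*Cp'*D0*(Q*(E*e1)) + 4*(n:ℝ)*Cp'^2*(Q^2*E^2)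
              + 8*(n:ℝ)*Cp'^3*((Q^3*|σ|)*E^3) := by ring
          _ ≤ K1*(R*e3) + (n:ℝ)*Cp'*D0*(R*e3) + 4*(n:ℝ)*Cp'^2*(R*e3)
              + 8*(n:ℝ)*Cp'^3*(R*e3) := by
              have c1 := mul_le_mul_of_nonneg_left hQe3b hK1pos.le
              have c2 := mul_le_mul_of_nonneg_left hQe3a
                (mul_nonneg (mul_nonneg hn0.le hCp'.le) hD0pos.le)
              have c3 := mul_le_mul_of_nonneg_left hQe3b
                (show (0:ℝ) ≤ 4*(n:ℝ)*Cp'^2 by positivity)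
              have c4 := mul_le_mul_of_nonneg_left hQe3c
                (show (0:ℝ) ≤ 8*(n:ℝ)*Cp'^3 by positivity)
              linarith only [c1, c2, c3, c4]
          _ = K2 * (R*e3) := by rw [hK2def]; ring
      have hRC : R ≤ Cabs * Real.exp (σ^2/32) := by rw [hRdef]; exact hCabs σ
      have hee : Real.exp (σ^2/32) ≤ Real.exp (σ^2/16) :=
        Real.exp_le_exp.mpr (by nlinarith only [sq_nonneg σ])
      have hexp32 : (1:ℝ) ≤ Real.exp (σ^2/32) := Real.one_le_exp (by positivity)
      have hCs : (K2 + K3)*Cabs ≤ Cstar := by rw [hCstardef]; exact le_max_right _ _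
      have hηbd : |η (a*σ)| ≤ 1 := by
        have := hηrange (a*σ)
        rw [abs_le]
        exact ⟨by linarith only [this.1], this.2⟩
      have hR16 : R ≤ Cabs * Real.exp (σ^2/16) :=
        le_trans hRC (mul_le_mul_of_nonneg_left hee (le_trans zero_le_one hCabs1))
      have hfin : K2 * (R * e3) ≤ Cstar * (e3 * Real.exp (σ^2/16)) := by
        have c1 : K2 * (R * e3) ≤ K2 * ((Cabs * Real.exp (σ^2/16)) * e3) :=
          mul_le_mul_of_nonneg_left
            (mul_le_mul_of_nonneg_right hR16 he30.le) hK2pos.le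
        have h0' : 0 ≤ K3 * (Cabs * (e3 * Real.exp (σ^2/16))) :=
          mul_nonneg hK3pos.le (mul_nonneg (le_trans zero_le_one hCabs1)
            (mul_nonneg he30.le (Real.exp_pos _).le))
        have c3 : ((K2+K3)*Cabs) * (e3 * Real.exp (σ^2/16))
            ≤ Cstar * (e3 * Real.exp (σ^2/16)) :=
          mul_le_mul_of_nonneg_right hCs (mul_nonneg he30.le (Real.exp_pos _).le)
        nlinarith only [c1, h0', c3]
      by_cases hnear : |a * σ| < 1
      · -- cutoff-derivative terms vanish
        have z1 : deriv η (a*σ) = 0 := st16_flat1_inner hη1 hnear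
        have z2 : deriv (deriv η) (a*σ) = 0 := st16_flat2_inner hη1 hnear
        have zτ : deriv (fun t => η (Real.exp (-gam k * t/5) * σ)) τ = 0 := by
          apply st16_deriv_time_zero η (Or.inl ?_) hη1 hη0
          rw [← hadef]; exact hnear
        rw [z1, z2, zτ]
        simp only [mul_zero, zero_mul, sub_zero, add_zero, zero_sub, neg_zero, zero_add]
        rw [abs_mul]
        calc |η (a*σ)| * |Nloc n v σ - (n:ℝ)*(deriv v σ)*(Iop v σ)|
            ≤ 1 * (K2 * (R * e3)) :=
              mul_le_mul hηbd hX (abs_nonneg _) zero_le_one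
          _ = K2 * (R * e3) := one_mul _
          _ ≤ Cstar * (e3 * Real.exp (σ^2/16)) := hfin
      · -- the cutoff-derivative region
        push_neg at hnear
        have haσ : a * |σ| ≤ 6/5 := by
          calc a * |σ| ≤ a * L := mul_le_mul_of_nonneg_left hσL ha0.le
            _ = 6/5 := haL
        have hσbig : Real.exp (gam k * τ/5) ≤ |σ| := by
          rw [abs_mul, abs_of_pos ha0] at hnear
          have h1 := mul_le_mul_of_nonneg_left hnear (Real.exp_pos (gam k * τ/5)).le
          rw [mul_one] at h1
          calc Real.exp (gam k * τ/5) ≤ Real.exp (gam k * τ/5) * (a * |σ|) := h1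
            _ = (a * Real.exp (gam k * τ/5)) * |σ| := by ring
            _ = |σ| := by rw [hae, one_mul]
        have hσsq : 16 * mu k * τ ≤ σ^2 := by
          have h1 : Real.exp (2*(gam k)*τ/5) ≤ σ^2 := by
            have h2 : Real.exp (gam k * τ/5) * Real.exp (gam k * τ/5) ≤ |σ| * |σ| :=
              mul_le_mul hσbig hσbig (Real.exp_pos _).le (abs_nonneg σ)
            rw [← Real.exp_add] at h2
            calc Real.exp (2*(gam k)*τ/5)
                = Real.exp (gam k * τ/5 + gam k * τ/5) := by congr 1; ring
              _ ≤ |σ| * |σ| := h2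
              _ = σ^2 := by rw [← pow_two, sq_abs]
          linarith only [hgrow, h1]
        have hEsplit : E ≤ e3 * Real.exp (σ^2/32) := by
          have h1 : E = e3 * Real.exp (mu k * τ/2) := by
            rw [hEdef, he3def, ← Real.exp_add]; congr 1; ring
          rw [h1]
          exact mul_le_mul_of_nonneg_left
            (Real.exp_le_exp.mpr (by linarith only [hσsq])) he30.le
        have hM0 : (0:ℝ) ≤ M := le_trans zero_le_one hM1
        -- bounds on the cutoff derivatives
        have hMd1 : |a * deriv η (a*σ)| ≤ M := by
          rw [abs_mul, abs_of_pos ha0]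
          calc a * |deriv η (a*σ)| ≤ 1 * |deriv η (a*σ)| :=
              mul_le_mul_of_nonneg_right ha1 (abs_nonneg _)
            _ = |deriv η (a*σ)| := one_mul _
            _ ≤ M := (hM _).1
        have hMd2 : |a^2 * deriv (deriv η) (a*σ)| ≤ M := by
          rw [abs_mul, abs_of_pos (pow_pos ha0 2)]
          have ha2 : a^2 ≤ 1 := pow_le_one₀ ha0.le ha1
          calc a^2 * |deriv (deriv η) (a*σ)| ≤ 1 * |deriv (deriv η) (a*σ)| :=
              mul_le_mul_of_nonneg_right ha2 (abs_nonneg _)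
            _ = |deriv (deriv η) (a*σ)| := one_mul _
            _ ≤ M := (hM _).2
        have hdτ : deriv (fun t => η (Real.exp (-gam k * t/5) * σ)) τ
            = deriv η (a * σ) * (a * (-gam k/5) * σ) := by
          have h1 := (st16_hasDerivAt_time η (st16_diff hηsmooth) (gam k) σ τ).deriv
          rw [← hadef] at h1
          exact h1
        have hMdτ : |deriv η (a * σ) * (a * (-gam k/5) * σ)| ≤ M := by
          rw [abs_mul]
          have h1 : |a * (-gam k/5) * σ| ≤ 1 := by
            have h2 : |a * (-gam k/5) * σ| = (gam k/5) * (a * |σ|) := by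
              rw [abs_mul, abs_mul, abs_of_pos ha0,
                abs_of_neg (by linarith only [hg0] : -gam k/5 < 0)]
              ring
            rw [h2]
            have h3 : gam k * (a * |σ|) ≤ (1/2) * (6/5) :=
              mul_le_mul hgle haσ (mul_nonneg ha0.le (abs_nonneg σ)) (by norm_num)
            linarith only [h3]
          calc |deriv η (a*σ)| * |a * (-gam k/5) * σ| ≤ M * 1 :=
              mul_le_mul (hM _).1 h1 (abs_nonneg _) hM0
            _ = M := mul_one M
        rw [hdτ]
        have hQQ2 : Q ≤ Q^2 := by nlinarith only [hQ1]
        -- assemble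
        have hT2 : |(deriv η (a * σ) * (a * (-gam k/5) * σ) - a^2 * deriv (deriv η) (a*σ)
            + σ/2 * (a * deriv η (a*σ))) * v σ| ≤ 3*M*Cp*(Q^2*E) := by
          rw [abs_mul]
          have hb1 : |deriv η (a * σ) * (a * (-gam k/5) * σ) - a^2 * deriv (deriv η) (a*σ)
              + σ/2 * (a * deriv η (a*σ))| ≤ 3*M*|σ| := by
            have h1 : |σ/2 * (a * deriv η (a*σ))| ≤ M * |σ| := by
              rw [abs_mul]
              have h1' : |σ/2| = |σ|/2 := by rw [abs_div, abs_two]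
              rw [h1']
              linarith only [mul_le_mul_of_nonneg_left hMd1 (abs_nonneg σ),
                mul_nonneg hM0 (abs_nonneg σ)]
            have h2 := abs_add_le (deriv η (a * σ) * (a * (-gam k/5) * σ)
              - a^2 * deriv (deriv η) (a*σ)) (σ/2 * (a * deriv η (a*σ)))
            have h3 := abs_sub (deriv η (a * σ) * (a * (-gam k/5) * σ))
              (a^2 * deriv (deriv η) (a*σ))
            have h4 : M * 1 ≤ M * |σ| := mul_le_mul_of_nonneg_left hσ1 hM0
            linarith only [h1, h2, h3, h4, hMdτ, hMd2]
          have hb2 : (0:ℝ) ≤ 3*M*|σ| :=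
            mul_nonneg (mul_nonneg (by norm_num) hM0) (abs_nonneg σ)
          calc |deriv η (a * σ) * (a * (-gam k/5) * σ) - a^2 * deriv (deriv η) (a*σ)
              + σ/2 * (a * deriv η (a*σ))| * |v σ|
              ≤ (3*M*|σ|) * (Cp * Q * E) :=
                mul_le_mul hb1 hvQ (abs_nonneg _) hb2
            _ = 3*M*Cp*((|σ| * Q)*E) := by ring
            _ ≤ 3*M*Cp*(Q^2*E) := by
                have h5 : (|σ| * Q)*E ≤ Q^2*E := by
                  refine mul_le_mul_of_nonneg_right ?_ hE0.le
                  calc |σ| * Q ≤ Q*Q := mul_le_mul_of_nonneg_right hσQ hQ0.le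
                    _ = Q^2 := (pow_two Q).symm
                exact mul_le_mul_of_nonneg_left h5
                  (mul_nonneg (mul_nonneg (by norm_num) hM0) hCp.le)
        have hT3 : |2 * (a * deriv η (a*σ)) * deriv v σ| ≤ 2*M*Cp'*(Q^2*E) := by
          rw [abs_mul, abs_mul, abs_two]
          have h1 : |a * deriv η (a*σ)| * |deriv v σ| ≤ M * (Cp'*Q*E) :=
            mul_le_mul hMd1 hv'Q (abs_nonneg _) hM0
          have h2 : Q*E ≤ Q^2*E := mul_le_mul_of_nonneg_right hQQ2 hE0.le
          have h3 : M*(Cp'*(Q*E)) ≤ M*(Cp'*(Q^2*E)) :=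
            mul_le_mul_of_nonneg_left (mul_le_mul_of_nonneg_left h2 hCp'.le) hM0
          calc 2 * |a * deriv η (a*σ)| * |deriv v σ|
              = 2 * (|a * deriv η (a*σ)| * |deriv v σ|) := by ring
            _ ≤ 2 * (M * (Cp'*Q*E)) := by linarith only [h1]
            _ = 2 * (M * (Cp'*(Q*E))) := by ring
            _ ≤ 2 * (M * (Cp'*(Q^2*E))) := by linarith only [h3]
            _ = 2*M*Cp'*(Q^2*E) := by ring
        have hT1 : |η (a*σ) * (Nloc n v σ - (n:ℝ)*(deriv v σ)*(Iop v σ))| ≤ K2 * (R*e3) := by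
          rw [abs_mul]
          calc |η (a*σ)| * |Nloc n v σ - (n:ℝ)*(deriv v σ)*(Iop v σ)|
              ≤ 1 * (K2 * (R * e3)) := mul_le_mul hηbd hX (abs_nonneg _) zero_le_one
            _ = K2 * (R*e3) := one_mul _
        have htot : |η (a*σ) * (Nloc n v σ - (n:ℝ)*(deriv v σ)*(Iop v σ))
            + (deriv η (a * σ) * (a * (-gam k/5) * σ) - a^2 * deriv (deriv η) (a*σ)
              + σ/2 * (a * deriv η (a*σ))) * v σ
            - 2 * (a * deriv η (a*σ)) * deriv v σ|
            ≤ K2 * (R*e3) + K3*(Q^2*E) := by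
          have h2 := abs_add_le (η (a*σ) * (Nloc n v σ - (n:ℝ)*(deriv v σ)*(Iop v σ)))
            ((deriv η (a * σ) * (a * (-gam k/5) * σ) - a^2 * deriv (deriv η) (a*σ)
              + σ/2 * (a * deriv η (a*σ))) * v σ)
          have h3 := abs_sub (η (a*σ) * (Nloc n v σ - (n:ℝ)*(deriv v σ)*(Iop v σ))
            + (deriv η (a * σ) * (a * (-gam k/5) * σ) - a^2 * deriv (deriv η) (a*σ)
              + σ/2 * (a * deriv η (a*σ))) * v σ)
            (2 * (a * deriv η (a*σ)) * deriv v σ)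
          have hEXP : K3*(Q^2*E) = 3*M*Cp*(Q^2*E) + 2*M*Cp'*(Q^2*E) := by
            rw [hK3def]; ring
          linarith only [h2, h3, hT1, hT2, hT3, hEXP]
        refine le_trans htot ?_
        -- final absorption
        have hQ2E : Q^2 * E ≤ R * (e3 * Real.exp (σ^2/32)) :=
          mul_le_mul hQ2R hEsplit hE0.le hR0.le
        have hRe : R * (e3 * Real.exp (σ^2/32)) ≤ Cabs * (e3 * Real.exp (σ^2/16)) := by
          have h1 : R * Real.exp (σ^2/32) ≤ Cabs * Real.exp (σ^2/16) := by
            calc R * Real.exp (σ^2/32) ≤ (Cabs * Real.exp (σ^2/32)) * Real.exp (σ^2/32) :=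
                mul_le_mul_of_nonneg_right hRC (Real.exp_pos _).le
              _ = Cabs * Real.exp (σ^2/16) := by
                  rw [mul_assoc, ← Real.exp_add,
                    show σ^2/32 + σ^2/32 = σ^2/16 by ring]
          calc R * (e3 * Real.exp (σ^2/32)) = (R * Real.exp (σ^2/32)) * e3 := by ring
            _ ≤ (Cabs * Real.exp (σ^2/16)) * e3 :=
                mul_le_mul_of_nonneg_right h1 he30.le
            _ = Cabs * (e3 * Real.exp (σ^2/16)) := by ring
        have hK2part : K2 * (R*e3) ≤ K2 * (Cabs * (e3 * Real.exp (σ^2/16))) := by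
          have h1 : R * e3 ≤ Cabs * (e3 * Real.exp (σ^2/16)) := by
            have h2 : (R*e3) * 1 ≤ (R*e3) * Real.exp (σ^2/32) :=
              mul_le_mul_of_nonneg_left hexp32 (mul_nonneg hR0.le he30.le)
            calc R * e3 = (R*e3) * 1 := by ring
              _ ≤ (R*e3) * Real.exp (σ^2/32) := h2
              _ = R * (e3 * Real.exp (σ^2/32)) := by ring
              _ ≤ _ := hRe
          exact mul_le_mul_of_nonneg_left h1 hK2pos.le
        have hK3part : K3 * (Q^2*E) ≤ K3 * (Cabs * (e3 * Real.exp (σ^2/16))) :=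
          mul_le_mul_of_nonneg_left (le_trans hQ2E hRe) hK3pos.le
        have hrecomb : (K2 + K3) * (Cabs * (e3 * Real.exp (σ^2/16)))
            = ((K2+K3)*Cabs) * (e3 * Real.exp (σ^2/16)) := by ring
        have hlast : ((K2+K3)*Cabs) * (e3 * Real.exp (σ^2/16))
            ≤ Cstar * (e3 * Real.exp (σ^2/16)) :=
          mul_le_mul_of_nonneg_right hCs (mul_nonneg he30.le (Real.exp_pos _).le)
        linarith only [hK2part, hK3part, hrecomb, hlast]
  -- from pointwise to the integral bound
  have hptw : ∀ᵐ σ : ℝ, (Gfun n k η v τ σ)^2 * Real.exp (-σ^2/4)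
      ≤ (Cstar * e3)^2 * Real.exp (-(1/8) * σ^2) := by
    have hsub : {σ : ℝ | ¬ ((Gfun n k η v τ σ)^2 * Real.exp (-σ^2/4)
        ≤ (Cstar * e3)^2 * Real.exp (-(1/8) * σ^2))} ⊆ {L, -L} := by
      intro σ hσ
      by_contra hmem
      apply hσ
      have hne : |σ| ≠ L := by
        intro h
        rcases (abs_eq (le_of_lt hL0)).mp h with h' | h'
        · exact hmem (by simp [h'])
        · exact hmem (by simp [h'])
      have h1 := key σ hne
      have h2 : (Gfun n k η v τ σ)^2 ≤ (Cstar * (e3 * Real.exp (σ^2/16)))^2 := by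
        rw [← sq_abs (Gfun n k η v τ σ)]
        exact pow_le_pow_left₀ (abs_nonneg _) h1 2
      have hid : (Cstar * (e3 * Real.exp (σ^2/16)))^2 * Real.exp (-σ^2/4)
          = (Cstar*e3)^2 * Real.exp (-(1/8)*σ^2) := by
        rw [show (-(1/8)*σ^2 : ℝ) = σ^2/16 + (σ^2/16 + -σ^2/4) by ring,
          Real.exp_add, Real.exp_add]
        ring
      calc (Gfun n k η v τ σ)^2 * Real.exp (-σ^2/4)
          ≤ (Cstar * (e3 * Real.exp (σ^2/16)))^2 * Real.exp (-σ^2/4) :=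
            mul_le_mul_of_nonneg_right h2 (Real.exp_pos _).le
        _ = (Cstar*e3)^2 * Real.exp (-(1/8)*σ^2) := hid
    exact MeasureTheory.ae_iff.mpr (measure_mono_null hsub
      (((Set.finite_singleton (-L)).insert L).measure_zero _))
  have h0 : 0 ≤ᵐ[MeasureTheory.volume] fun σ : ℝ => (Gfun n k η v τ σ)^2 * Real.exp (-σ^2/4) :=
    Filter.Eventually.of_forall (fun σ => by positivity)
  have hint : MeasureTheory.Integrable (fun σ : ℝ => (Cstar*e3)^2 * Real.exp (-(1/8) * σ^2)) :=
    (integrable_exp_neg_mul_sq (by norm_num : (0:ℝ) < 1/8)).const_mul _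
  have hmono := MeasureTheory.integral_mono_of_nonneg h0 hint hptw
  have hgauss : (∫ σ : ℝ, (Cstar*e3)^2 * Real.exp (-(1/8) * σ^2))
      = (Cstar*e3)^2 * Real.sqrt (Real.pi / (1/8)) := by
    rw [MeasureTheory.integral_const_mul, integral_gaussian]
  have hpi : Real.sqrt (Real.pi / (1/8)) ≤ 9 := by
    rw [show (9:ℝ) = Real.sqrt 81 by
      rw [show (81:ℝ) = 9^2 by norm_num, Real.sqrt_sq (by norm_num : (0:ℝ) ≤ 9)]]
    exact Real.sqrt_le_sqrt (by linarith only [Real.pi_le_four])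
  have hfinal : (∫ σ : ℝ, (Gfun n k η v τ σ)^2 * Real.exp (-σ^2/4)) ≤ (3*Cstar*e3)^2 := by
    calc (∫ σ : ℝ, (Gfun n k η v τ σ)^2 * Real.exp (-σ^2/4))
        ≤ (Cstar*e3)^2 * Real.sqrt (Real.pi/(1/8)) := by rw [← hgauss]; exact hmono
      _ ≤ (Cstar*e3)^2 * 9 := mul_le_mul_of_nonneg_left hpi (by positivity)
      _ = (3*Cstar*e3)^2 := by ring
  calc Real.sqrt (∫ σ : ℝ, (Gfun n k η v τ σ)^2 * Real.exp (-σ^2/4))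
      ≤ Real.sqrt ((3*Cstar*e3)^2) := Real.sqrt_le_sqrt hfinal
    _ = 3*Cstar*e3 := Real.sqrt_sq (mul_nonneg (mul_nonneg (by norm_num) hCstar.le) he30.le)
    _ = 3*Cstar*e3 := by ring
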